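/- arXiv:0710.1344 — 2 statements merged into one kernel-verified Lean document; each statement's English description precedes it below -/
import Mathlib

section
/- Let A ≥ C > 0 and B, D, E be real numbers, set F = E²/(4C), and define the Gaussian kernel ρ(x₁,x₂) = (2√C/√π)·exp(−A(x₁−x₂)² − iB(x₁²−x₂²) − C(x₁+x₂)² − iD(x₁−x₂) − E(x₁+x₂) − F) on ℝ×ℝ. Then ∫ρ(x,x)dx = 1, and with m := ∫ x ρ(x,x) dx = −E/(4C) one has ∫∫(x₁−x₂)²|ρ(x₁,x₂)|²dx₁dx₂ / ∫∫|ρ(x₁,x₂)|²dx₁dx₂ = 1/(4A) and ∫∫(x₁+x₂−2m)²|ρ(x₁,x₂)|²dx₁dx₂ / ∫∫|ρ(x₁,x₂)|²dx₁dx₂ = 1/(4C). Consequently the spatial coherence index S_X(ρ) := (∫∫(x₁−x₂)²|ρ|²)^{1/2} / (∫∫(x₁+x₂−2m)²|ρ|²)^{1/2} equals √(C/A). -/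
open MeasureTheory

private lemma myJ1 {b : ℝ} (hb : 0 < b) :
    ∫ x : ℝ, x * Real.exp (-b * x ^ 2) = 0 := by
  have h := integral_neg_eq_self (fun x : ℝ => x * Real.exp (-b * x ^ 2)) volume
  simp only [neg_sq, neg_mul] at h
  rw [integral_neg] at h
  simp only [neg_mul]
  linarith

private lemma myInt2 {b : ℝ} (hb : 0 < b) :
    Integrable (fun x : ℝ => x ^ 2 * Real.exp (-b * x ^ 2)) := by
  have := integrable_rpow_mul_exp_neg_mul_sq hb (by norm_num : (-1 : ℝ) < 2)
  have h2 : ∀ x : ℝ, x ^ (2 : ℝ) = x ^ 2 := fun x => by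
    rw [show (2 : ℝ) = ((2 : ℕ) : ℝ) by norm_num, Real.rpow_natCast]
  simpa only [h2] using this

private lemma myJ2 {b : ℝ} (hb : 0 < b) :
    ∫ x : ℝ, x ^ 2 * Real.exp (-b * x ^ 2) = Real.sqrt (Real.pi / b) / (2 * b) := by
  have hint := myInt2 hb
  have hs := intervalIntegral.integral_Iic_add_Ioi (b := (0 : ℝ))
    hint.integrableOn hint.integrableOn
  have heven : (∫ x in Set.Iic (0 : ℝ), x ^ 2 * Real.exp (-b * x ^ 2))
      = ∫ x in Set.Ioi (0 : ℝ), x ^ 2 * Real.exp (-b * x ^ 2) := by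
    rw [show Set.Iic (0:ℝ) = Set.Iic (-0) by norm_num, ← integral_comp_neg_Ioi]
    simp
  have hIoi : (∫ x in Set.Ioi (0 : ℝ), x ^ 2 * Real.exp (-b * x ^ 2))
      = b ^ (-(3 : ℝ) / 2) * (1 / 2) * Real.Gamma (3 / 2) := by
    have h := integral_rpow_mul_exp_neg_mul_rpow (p := 2) (q := 2) (b := b)
      (by norm_num) (by norm_num) hb
    have h2 : ∀ x : ℝ, x ^ (2 : ℝ) = x ^ 2 := fun x => by
      rw [show (2 : ℝ) = ((2 : ℕ) : ℝ) by norm_num, Real.rpow_natCast]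
    simp only [h2] at h
    rw [h]
    norm_num
  have hG : Real.Gamma (3 / 2) = Real.sqrt Real.pi / 2 := by
    have h := Real.Gamma_add_one (s := 1 / 2) (by norm_num)
    rw [show (1 : ℝ) / 2 + 1 = 3 / 2 by norm_num] at h
    rw [h, Real.Gamma_one_half_eq]
    ring
  have hsb : 0 < Real.sqrt b := Real.sqrt_pos.mpr hb
  have hbpow : b ^ (-(3 : ℝ) / 2) = 1 / (b * Real.sqrt b) := by
    rw [show -(3 : ℝ) / 2 = -(1 + 1 / 2) by norm_num, Real.rpow_neg hb.le,
      Real.rpow_add hb, Real.rpow_one, ← Real.sqrt_eq_rpow]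
    field_simp
  have hsd : Real.sqrt (Real.pi / b) = Real.sqrt Real.pi / Real.sqrt b :=
    Real.sqrt_div Real.pi_pos.le b
  rw [heven] at hs
  rw [← hs, hIoi, hG, hbpow, hsd]
  field_simp
  ring

private lemma aux_exp {b : ℝ} (hb : 0 < b) (μ : ℝ) :
    ∫ x : ℝ, Real.exp (-b * (x - μ) ^ 2) = Real.sqrt (Real.pi / b) := by
  rw [← integral_gaussian b]
  exact integral_sub_right_eq_self (fun y : ℝ => Real.exp (-b * y ^ 2)) μ

private lemma aux_lin {b : ℝ} (hb : 0 < b) (μ : ℝ) :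
    ∫ x : ℝ, x * Real.exp (-b * (x - μ) ^ 2) = μ * Real.sqrt (Real.pi / b) := by
  have h := integral_add_right_eq_self (μ := volume)
    (fun x : ℝ => x * Real.exp (-b * (x - μ) ^ 2)) μ
  simp only [add_sub_cancel_right] at h
  rw [← h]
  have hsplit : ∀ x : ℝ, (x + μ) * Real.exp (-b * x ^ 2)
      = x * Real.exp (-b * x ^ 2) + μ * Real.exp (-b * x ^ 2) := fun x => by ring
  simp only [hsplit]
  rw [integral_add (integrable_mul_exp_neg_mul_sq hb)
    ((integrable_exp_neg_mul_sq hb).const_mul μ), myJ1 hb, integral_const_mul,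
    integral_gaussian]
  ring

private lemma aux_full {b : ℝ} (hb : 0 < b) (μ c₀ c₁ c₂ : ℝ) :
    ∫ x : ℝ, (c₂ * (x - μ) ^ 2 + c₁ * (x - μ) + c₀) * Real.exp (-b * (x - μ) ^ 2)
      = (c₂ / (2 * b) + c₀) * Real.sqrt (Real.pi / b) := by
  have h := integral_sub_right_eq_self (μ := volume)
    (fun y : ℝ => (c₂ * y ^ 2 + c₁ * y + c₀) * Real.exp (-b * y ^ 2)) μ
  rw [show (∫ x : ℝ, (c₂ * (x - μ) ^ 2 + c₁ * (x - μ) + c₀) * Real.exp (-b * (x - μ) ^ 2))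
      = ∫ x : ℝ, (fun y : ℝ => (c₂ * y ^ 2 + c₁ * y + c₀) * Real.exp (-b * y ^ 2)) (x - μ)
      from rfl, h]
  have hsplit : ∀ x : ℝ, (c₂ * x ^ 2 + c₁ * x + c₀) * Real.exp (-b * x ^ 2)
      = c₂ * (x ^ 2 * Real.exp (-b * x ^ 2)) + (c₁ * (x * Real.exp (-b * x ^ 2))
        + c₀ * Real.exp (-b * x ^ 2)) := fun x => by ring
  simp only [hsplit]
  have ig : Integrable (fun x : ℝ => c₁ * (x * Real.exp (-b * x ^ 2))
      + c₀ * Real.exp (-b * x ^ 2)) volume :=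
    ((integrable_mul_exp_neg_mul_sq hb).const_mul c₁).add
      ((integrable_exp_neg_mul_sq hb).const_mul c₀)
  rw [integral_add ((myInt2 hb).const_mul c₂) ig,
    integral_add ((integrable_mul_exp_neg_mul_sq hb).const_mul c₁)
      ((integrable_exp_neg_mul_sq hb).const_mul c₀),
    integral_const_mul, integral_const_mul, integral_const_mul,
    myJ1 hb, myJ2 hb, integral_gaussian]
  field_simp
  ring

/-- For the one-dimensional Gaussian density kernel
`ρ(x₁,x₂) = (2√C/√π)·exp(−A(x₁−x₂)² − iB(x₁²−x₂²) − C(x₁+x₂)² − iD(x₁−x₂) − E(x₁+x₂) − F)`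
with `A ≥ C > 0` and `F = E²/(4C)`: the diagonal integrates to `1`, the position mean is
`m = −E/(4C)`, the normalized off-diagonal and diagonal second moments are `1/(4A)` and `1/(4C)`,
and the spatial coherence index equals `√(C/A)`. -/
theorem gaussian_coherence_index
    (A B C D E F : ℝ) (hC : 0 < C) (hAC : C ≤ A) (hF : F = E ^ 2 / (4 * C))
    (ρ : ℝ → ℝ → ℂ)
    (hρ : ∀ x₁ x₂ : ℝ, ρ x₁ x₂ =
      ((2 * Real.sqrt C / Real.sqrt Real.pi : ℝ) : ℂ) *
        Complex.exp (-((A * (x₁ - x₂) ^ 2 : ℝ) : ℂ)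
          - Complex.I * ((B * (x₁ ^ 2 - x₂ ^ 2) : ℝ) : ℂ)
          - ((C * (x₁ + x₂) ^ 2 : ℝ) : ℂ)
          - Complex.I * ((D * (x₁ - x₂) : ℝ) : ℂ)
          - ((E * (x₁ + x₂) : ℝ) : ℂ)
          - ((F : ℝ) : ℂ)))
    (m : ℝ) (hm : m = -E / (4 * C)) :
    (∫ x : ℝ, ρ x x) = 1 ∧
    (∫ x : ℝ, (x : ℂ) * ρ x x) = (m : ℂ) ∧
    (∫ x₁ : ℝ, ∫ x₂ : ℝ, (x₁ - x₂) ^ 2 * ‖ρ x₁ x₂‖ ^ 2) /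
        (∫ x₁ : ℝ, ∫ x₂ : ℝ, ‖ρ x₁ x₂‖ ^ 2) = 1 / (4 * A) ∧
    (∫ x₁ : ℝ, ∫ x₂ : ℝ, (x₁ + x₂ - 2 * m) ^ 2 * ‖ρ x₁ x₂‖ ^ 2) /
        (∫ x₁ : ℝ, ∫ x₂ : ℝ, ‖ρ x₁ x₂‖ ^ 2) = 1 / (4 * C) ∧
    Real.sqrt (∫ x₁ : ℝ, ∫ x₂ : ℝ, (x₁ - x₂) ^ 2 * ‖ρ x₁ x₂‖ ^ 2) /
        Real.sqrt (∫ x₁ : ℝ, ∫ x₂ : ℝ, (x₁ + x₂ - 2 * m) ^ 2 * ‖ρ x₁ x₂‖ ^ 2) =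
      Real.sqrt (C / A) := by
  have hA : 0 < A := lt_of_lt_of_le hC hAC
  have hACs : (0 : ℝ) < A + C := by linarith
  have hπ : 0 < Real.pi := Real.pi_pos
  have hsC : 0 < Real.sqrt C := Real.sqrt_pos.mpr hC
  have hsπ : 0 < Real.sqrt Real.pi := Real.sqrt_pos.mpr hπ
  have h4C : (0 : ℝ) < 4 * C := by linarith
  -- diagonal kernel
  have hdiag : ∀ x : ℝ, ρ x x =
      (((2 * Real.sqrt C / Real.sqrt Real.pi) * Real.exp (-(4 * C) * (x - m) ^ 2) : ℝ) : ℂ) := by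
    intro x
    rw [hρ]
    have hre : -(4 * C) * (x - m) ^ 2
        = -(A * (x - x) ^ 2) - C * (x + x) ^ 2 - E * (x + x) - F := by
      subst hF hm
      field_simp
      ring
    have hcast : (-((A * (x - x) ^ 2 : ℝ) : ℂ)
          - Complex.I * ((B * (x ^ 2 - x ^ 2) : ℝ) : ℂ)
          - ((C * (x + x) ^ 2 : ℝ) : ℂ)
          - Complex.I * ((D * (x - x) : ℝ) : ℂ)
          - ((E * (x + x) : ℝ) : ℂ)
          - ((F : ℝ) : ℂ))
        = ((-(A * (x - x) ^ 2) - C * (x + x) ^ 2 - E * (x + x) - F : ℝ) : ℂ) := by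
      push_cast
      ring
    rw [hcast, ← hre, ← Complex.ofReal_exp, ← Complex.ofReal_mul]
  -- key constant
  have hconst : 2 * Real.sqrt C / Real.sqrt Real.pi * Real.sqrt (Real.pi / (4 * C)) = 1 := by
    rw [Real.sqrt_div Real.pi_pos.le, show (4 : ℝ) * C = 2 ^ 2 * C by ring,
      Real.sqrt_mul (by positivity), Real.sqrt_sq (by norm_num : (0:ℝ) ≤ 2)]
    field_simp
  have goal1 : (∫ x : ℝ, ρ x x) = 1 := by
    simp only [hdiag]
    have hreal : (∫ x : ℝ, 2 * Real.sqrt C / Real.sqrt Real.pi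
        * Real.exp (-(4 * C) * (x - m) ^ 2)) = 1 := by
      rw [integral_const_mul, aux_exp h4C m, hconst]
    calc (∫ x : ℝ, ((2 * Real.sqrt C / Real.sqrt Real.pi
            * Real.exp (-(4 * C) * (x - m) ^ 2) : ℝ) : ℂ))
        = ((∫ x : ℝ, 2 * Real.sqrt C / Real.sqrt Real.pi
            * Real.exp (-(4 * C) * (x - m) ^ 2) : ℝ) : ℂ) := integral_ofReal
      _ = 1 := by rw [hreal]; norm_num
  have goal2 : (∫ x : ℝ, (x : ℂ) * ρ x x) = (m : ℂ) := by
    have hpt : ∀ x : ℝ, (x : ℂ) * ρ x x =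
        ((2 * Real.sqrt C / Real.sqrt Real.pi * (x * Real.exp (-(4 * C) * (x - m) ^ 2)) : ℝ) : ℂ) := by
      intro x
      rw [hdiag x]
      push_cast
      ring
    simp only [hpt]
    have hreal : (∫ x : ℝ, 2 * Real.sqrt C / Real.sqrt Real.pi
        * (x * Real.exp (-(4 * C) * (x - m) ^ 2))) = m := by
      rw [integral_const_mul, aux_lin h4C m]
      calc 2 * Real.sqrt C / Real.sqrt Real.pi * (m * Real.sqrt (Real.pi / (4 * C)))
          = m * (2 * Real.sqrt C / Real.sqrt Real.pi * Real.sqrt (Real.pi / (4 * C))) := by ring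
        _ = m := by rw [hconst]; ring
    calc (∫ x : ℝ, ((2 * Real.sqrt C / Real.sqrt Real.pi
            * (x * Real.exp (-(4 * C) * (x - m) ^ 2)) : ℝ) : ℂ))
        = ((∫ x : ℝ, 2 * Real.sqrt C / Real.sqrt Real.pi
            * (x * Real.exp (-(4 * C) * (x - m) ^ 2)) : ℝ) : ℂ) := integral_ofReal
      _ = (m : ℂ) := by rw [hreal]
  -- squared-norm kernel
  have hN : ∀ x₁ x₂ : ℝ, ‖ρ x₁ x₂‖ ^ 2 = (4 * C / Real.pi) *
      Real.exp (-(2 * (A + C)) * (x₂ - ((A - C) * x₁ + 2 * C * m) / (A + C)) ^ 2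
        + -(8 * A * C / (A + C)) * (x₁ - m) ^ 2) := by
    intro x₁ x₂
    rw [hρ, norm_mul, Complex.norm_real, Real.norm_eq_abs,
      Complex.norm_exp]
    have hre : (-((A * (x₁ - x₂) ^ 2 : ℝ) : ℂ)
          - Complex.I * ((B * (x₁ ^ 2 - x₂ ^ 2) : ℝ) : ℂ)
          - ((C * (x₁ + x₂) ^ 2 : ℝ) : ℂ)
          - Complex.I * ((D * (x₁ - x₂) : ℝ) : ℂ)
          - ((E * (x₁ + x₂) : ℝ) : ℂ)
          - ((F : ℝ) : ℂ)).re
        = -(A * (x₁ - x₂) ^ 2) - C * (x₁ + x₂) ^ 2 - E * (x₁ + x₂) - F := by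
      rw [show (-((A * (x₁ - x₂) ^ 2 : ℝ) : ℂ)
          - Complex.I * ((B * (x₁ ^ 2 - x₂ ^ 2) : ℝ) : ℂ)
          - ((C * (x₁ + x₂) ^ 2 : ℝ) : ℂ)
          - Complex.I * ((D * (x₁ - x₂) : ℝ) : ℂ)
          - ((E * (x₁ + x₂) : ℝ) : ℂ)
          - ((F : ℝ) : ℂ))
        = ((-(A * (x₁ - x₂) ^ 2) - C * (x₁ + x₂) ^ 2 - E * (x₁ + x₂) - F : ℝ) : ℂ)
          + ((-(B * (x₁ ^ 2 - x₂ ^ 2)) - D * (x₁ - x₂) : ℝ) : ℂ) * Complex.I from by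
        push_cast; ring]
      simp only [Complex.add_re, Complex.mul_re, Complex.ofReal_re, Complex.ofReal_im,
        Complex.I_re, Complex.I_im]
      ring
    rw [hre]
    have habs : |2 * Real.sqrt C / Real.sqrt Real.pi| = 2 * Real.sqrt C / Real.sqrt Real.pi := by
      rw [abs_of_nonneg]; positivity
    rw [habs, mul_pow, sq (Real.exp _), ← Real.exp_add, div_pow, mul_pow,
      Real.sq_sqrt hC.le, Real.sq_sqrt hπ.le]
    have hexp : -(A * (x₁ - x₂) ^ 2) - C * (x₁ + x₂) ^ 2 - E * (x₁ + x₂) - F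
          + (-(A * (x₁ - x₂) ^ 2) - C * (x₁ + x₂) ^ 2 - E * (x₁ + x₂) - F)
        = -(2 * (A + C)) * (x₂ - ((A - C) * x₁ + 2 * C * m) / (A + C)) ^ 2
          + -(8 * A * C / (A + C)) * (x₁ - m) ^ 2 := by
      subst hF hm
      field_simp
      ring
    rw [hexp]
    ring
  have hbb : (0 : ℝ) < 2 * (A + C) := by linarith
  have hkk : (0 : ℝ) < 8 * A * C / (A + C) := by positivity
  set P : ℝ := (4 * C / Real.pi) * Real.sqrt (Real.pi / (2 * (A + C)))
      * Real.sqrt (Real.pi / (8 * A * C / (A + C))) with hPdef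
  have hP : 0 < P := by
    have h1 : 0 < Real.sqrt (Real.pi / (2 * (A + C))) := Real.sqrt_pos.mpr (by positivity)
    have h2 : 0 < Real.sqrt (Real.pi / (8 * A * C / (A + C))) := Real.sqrt_pos.mpr (by positivity)
    positivity
  -- master computation
  have master : ∀ σ τ ε : ℝ,
      (∫ x₁ : ℝ, ∫ x₂ : ℝ,
        ((σ * (x₁ - x₂) + τ * (x₁ + x₂ - 2 * m)) ^ 2 + ε) * ‖ρ x₁ x₂‖ ^ 2)
      = (σ ^ 2 / (4 * A) + τ ^ 2 / (4 * C) + ε) * P := by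
    intro σ τ ε
    have hinner : ∀ x₁ : ℝ,
        (∫ x₂ : ℝ, ((σ * (x₁ - x₂) + τ * (x₁ + x₂ - 2 * m)) ^ 2 + ε) * ‖ρ x₁ x₂‖ ^ 2)
        = ((4 * C / Real.pi) * Real.sqrt (Real.pi / (2 * (A + C))))
          * (((2 * (C * σ + A * τ) / (A + C)) ^ 2 * (x₁ - m) ^ 2 + 0 * (x₁ - m)
              + ((τ - σ) ^ 2 / (2 * (2 * (A + C))) + ε))
            * Real.exp (-(8 * A * C / (A + C)) * (x₁ - m) ^ 2)) := by
      intro x₁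
      have hpt : ∀ x₂ : ℝ,
          ((σ * (x₁ - x₂) + τ * (x₁ + x₂ - 2 * m)) ^ 2 + ε) * ‖ρ x₁ x₂‖ ^ 2
          = ((4 * C / Real.pi) * Real.exp (-(8 * A * C / (A + C)) * (x₁ - m) ^ 2))
            * (((τ - σ) ^ 2 * (x₂ - ((A - C) * x₁ + 2 * C * m) / (A + C)) ^ 2
                + (2 * (τ - σ) * (2 * (C * σ + A * τ) / (A + C) * (x₁ - m)))
                  * (x₂ - ((A - C) * x₁ + 2 * C * m) / (A + C))
                + ((2 * (C * σ + A * τ) / (A + C) * (x₁ - m)) ^ 2 + ε))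
              * Real.exp (-(2 * (A + C))
                  * (x₂ - ((A - C) * x₁ + 2 * C * m) / (A + C)) ^ 2)) := by
        intro x₂
        rw [hN, Real.exp_add]
        have hw : σ * (x₁ - x₂) + τ * (x₁ + x₂ - 2 * m)
            = (τ - σ) * (x₂ - ((A - C) * x₁ + 2 * C * m) / (A + C))
              + 2 * (C * σ + A * τ) / (A + C) * (x₁ - m) := by
          field_simp
          ring
        rw [hw]
        ring
      simp only [hpt]
      rw [integral_const_mul, aux_full hbb]
      ring
    simp only [hinner]
    rw [integral_const_mul, aux_full hkk]
    have key : (2 * (C * σ + A * τ) / (A + C)) ^ 2 / (2 * (8 * A * C / (A + C)))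
        + ((τ - σ) ^ 2 / (2 * (2 * (A + C))) + ε)
        = σ ^ 2 / (4 * A) + τ ^ 2 / (4 * C) + ε := by
      field_simp
      ring
    rw [key, hPdef]
    ring
  have hI0 : (∫ x₁ : ℝ, ∫ x₂ : ℝ, ‖ρ x₁ x₂‖ ^ 2) = P := by
    have h := master 0 0 1
    have hc : ∀ x₁ x₂ : ℝ, ((0 * (x₁ - x₂) + 0 * (x₁ + x₂ - 2 * m)) ^ 2 + 1) * ‖ρ x₁ x₂‖ ^ 2
        = ‖ρ x₁ x₂‖ ^ 2 := fun x₁ x₂ => by ring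
    simp only [hc] at h
    rw [h]
    norm_num
  have hI1 : (∫ x₁ : ℝ, ∫ x₂ : ℝ, (x₁ - x₂) ^ 2 * ‖ρ x₁ x₂‖ ^ 2) = 1 / (4 * A) * P := by
    have h := master 1 0 0
    have hc : ∀ x₁ x₂ : ℝ, ((1 * (x₁ - x₂) + 0 * (x₁ + x₂ - 2 * m)) ^ 2 + 0) * ‖ρ x₁ x₂‖ ^ 2
        = (x₁ - x₂) ^ 2 * ‖ρ x₁ x₂‖ ^ 2 := fun x₁ x₂ => by ring
    simp only [hc] at h
    rw [h]
    norm_num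
  have hI2 : (∫ x₁ : ℝ, ∫ x₂ : ℝ, (x₁ + x₂ - 2 * m) ^ 2 * ‖ρ x₁ x₂‖ ^ 2)
      = 1 / (4 * C) * P := by
    have h := master 0 1 0
    have hc : ∀ x₁ x₂ : ℝ, ((0 * (x₁ - x₂) + 1 * (x₁ + x₂ - 2 * m)) ^ 2 + 0) * ‖ρ x₁ x₂‖ ^ 2
        = (x₁ + x₂ - 2 * m) ^ 2 * ‖ρ x₁ x₂‖ ^ 2 := fun x₁ x₂ => by ring
    simp only [hc] at h
    rw [h]
    norm_num
  refine ⟨goal1, goal2, ?_, ?_, ?_⟩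
  · rw [hI1, hI0, mul_div_assoc, div_self hP.ne', mul_one]
  · rw [hI2, hI0, mul_div_assoc, div_self hP.ne', mul_one]
  · rw [hI1, hI2, ← Real.sqrt_div (by positivity)]
    congr 1
    field_simp [hP.ne', hA.ne', hC.ne']
end

section
/- Let d ≥ 1 and let ν be a nonzero σ-finite Borel measure on ℝ^d invariant under k ↦ −k, absolutely continuous with respect to Lebesgue measure, and with ∫|k|²dν(k) < ∞; set ψ_ν(l) := ∫(cos(k·l) − 1)dν(k) and B_ν := ∫ k⊗k dν(k). Then B_ν is positive definite, ψ_ν(l) < 0 for every l ≠ 0 (so the absolute maximum of ψ_ν is attained only at the origin), and for every ε ∈ (0,1) there exists δ > 0 such that for all |l| ≤ δ: −((1+ε)/2)⟨l, B_ν l⟩ ≤ ψ_ν(l) ≤ −((1−ε)/2)⟨l, B_ν l⟩. -/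
open MeasureTheory
open scoped RealInnerProductSpace ENNReal

private lemma aux_cos_lower (x : ℝ) : 0 ≤ Real.cos x - 1 + x ^ 2 / 2 := by
  nlinarith [Real.one_sub_sq_div_two_le_cos (x := x)]

private lemma aux_cos_upper (x : ℝ) : Real.cos x - 1 + x ^ 2 / 2 ≤ x ^ 2 * min 1 (x ^ 2) := by
  rcases le_or_gt (|x|) 1 with h | h
  · have hb := Real.cos_bound h
    have hx2 : x ^ 2 ≤ 1 := by nlinarith [abs_nonneg x, sq_abs x]
    rw [min_eq_right hx2]
    have h4 : |x| ^ 4 = x ^ 2 * x ^ 2 := by rw [← sq_abs]; ring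
    nlinarith [abs_le.mp hb, abs_nonneg x]
  · rw [min_eq_left (by nlinarith [sq_abs x])]
    nlinarith [Real.cos_le_one x, sq_abs x]

private lemma aux_coord {d : ℕ} (k : EuclideanSpace ℝ (Fin d)) (i : Fin d) :
    k i ^ 2 ≤ ‖k‖ ^ 2 := by
  rw [EuclideanSpace.norm_eq, Real.sq_sqrt (by positivity)]
  simpa using Finset.single_le_sum (f := fun j => k j ^ 2) (fun j _ => sq_nonneg (k j))
    (Finset.mem_univ i)

private lemma aux_null {d : ℕ} (l : EuclideanSpace ℝ (Fin d)) (hl : l ≠ 0) (c : ℝ) :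
    volume {k : EuclideanSpace ℝ (Fin d) | (⟪k, l⟫ : ℝ) = c} = 0 := by
  set S : Submodule ℝ (EuclideanSpace ℝ (Fin d)) := LinearMap.ker ((innerSL ℝ l : EuclideanSpace ℝ (Fin d) →L[ℝ] ℝ) : EuclideanSpace ℝ (Fin d) →ₗ[ℝ] ℝ) with hSdef
  have hS : S ≠ ⊤ := by
    intro h
    have hm : l ∈ S := h ▸ Submodule.mem_top
    rw [hSdef, LinearMap.mem_ker] at hm
    simp only [ContinuousLinearMap.coe_coe, innerSL_apply_apply] at hm
    exact hl (inner_self_eq_zero.mp hm)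
  have hln : ‖l‖ ≠ 0 := norm_ne_zero_iff.mpr hl
  set k₀ : EuclideanSpace ℝ (Fin d) := (c / ‖l‖ ^ 2) • l with hk₀def
  have hk₀ : (⟪k₀, l⟫ : ℝ) = c := by
    rw [hk₀def, real_inner_smul_left, real_inner_self_eq_norm_sq]
    field_simp
  have hset : {k : EuclideanSpace ℝ (Fin d) | (⟪k, l⟫ : ℝ) = c}
      = ↑(AffineSubspace.mk' k₀ S) := by
    ext k
    simp only [Set.mem_setOf_eq, SetLike.mem_coe, AffineSubspace.mem_mk',
      vsub_eq_sub, hSdef, LinearMap.mem_ker, ContinuousLinearMap.coe_coe, innerSL_apply_apply, inner_sub_right]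
    rw [real_inner_comm k l, real_inner_comm k₀ l] at *
    rw [hk₀, sub_eq_zero]
  rw [hset]
  refine Measure.addHaar_affineSubspace _ _ (fun h => hS ?_)
  have h2 := AffineSubspace.direction_mk' k₀ S
  rw [h, AffineSubspace.direction_top] at h2
  exact h2.symm

set_option maxHeartbeats 1000000 in
/-- For a nonzero symmetric measure `ν` absolutely continuous with respect to
Lebesgue measure with finite second moments: the second-moment matrix `B_ν` is positive definite,
the Lévy exponent `ψ_ν` is strictly negative away from the origin (so its absolute maximum is
attained only at `0`), and for every `ε ∈ (0,1)` there is `δ > 0` with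
`−((1+ε)/2)⟨l,B_ν l⟩ ≤ ψ_ν(l) ≤ −((1−ε)/2)⟨l,B_ν l⟩` for `|l| ≤ δ`. -/
theorem levy_exponent_density
    (d : ℕ) (hd : 1 ≤ d)
    (ν : Measure (EuclideanSpace ℝ (Fin d))) [SigmaFinite ν]
    (hne : ν ≠ 0)
    (hsymm : ν.map (fun k => -k) = ν)
    (hac : ν ≪ (volume : Measure (EuclideanSpace ℝ (Fin d))))
    (hmom : (∫⁻ k, (‖k‖₊ : ℝ≥0∞) ^ 2 ∂ν) < ⊤)
    (ψ : EuclideanSpace ℝ (Fin d) → ℝ)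
    (hψ : ∀ l, ψ l = ∫ k, (Real.cos (⟪k, l⟫ : ℝ) - 1) ∂ν)
    (B : Matrix (Fin d) (Fin d) ℝ)
    (hB : ∀ i j, B i j = ∫ k, k i * k j ∂ν) :
    B.PosDef ∧
    (∀ l : EuclideanSpace ℝ (Fin d), l ≠ 0 → ψ l < 0) ∧
    (∀ ε ∈ Set.Ioo (0 : ℝ) 1, ∃ δ > (0 : ℝ), ∀ l : EuclideanSpace ℝ (Fin d), ‖l‖ ≤ δ →
      -((1 + ε) / 2) * (∑ i, ∑ j, l i * B i j * l j) ≤ ψ l ∧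
      ψ l ≤ -((1 - ε) / 2) * (∑ i, ∑ j, l i * B i j * l j)) := by
  -- basic integrability facts
  have hν2 : Integrable (fun k : EuclideanSpace ℝ (Fin d) => ‖k‖ ^ 2) ν := by
    refine ⟨(continuous_norm.pow 2).aestronglyMeasurable, ?_⟩
    simp only [HasFiniteIntegral, enorm_pow, enorm_norm]
    exact hmom
  have hint_coord : ∀ i j, Integrable (fun k : EuclideanSpace ℝ (Fin d) => k i * k j) ν := by
    intro i j
    refine hν2.mono' (((EuclideanSpace.proj i).continuous.mul
      (EuclideanSpace.proj j).continuous).aestronglyMeasurable) ?_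
    refine Filter.Eventually.of_forall fun k => ?_
    rw [Real.norm_eq_abs, abs_mul]
    nlinarith [aux_coord k i, aux_coord k j, abs_nonneg (k i), abs_nonneg (k j),
      sq_abs (k i), sq_abs (k j), sq_nonneg (|k i| - |k j|), norm_nonneg k]
  have hCS : ∀ (k l : EuclideanSpace ℝ (Fin d)), (⟪k, l⟫ : ℝ) ^ 2 ≤ ‖k‖ ^ 2 * ‖l‖ ^ 2 := by
    intro k l
    nlinarith [abs_real_inner_le_norm k l, abs_nonneg (⟪k, l⟫ : ℝ), sq_abs (⟪k, l⟫ : ℝ),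
      norm_nonneg k, norm_nonneg l, mul_nonneg (norm_nonneg k) (norm_nonneg l)]
  have hinner_cont : ∀ l : EuclideanSpace ℝ (Fin d),
      Continuous (fun k : EuclideanSpace ℝ (Fin d) => (⟪k, l⟫ : ℝ)) :=
    fun l => continuous_id.inner continuous_const
  have hint_inner_sq : ∀ l : EuclideanSpace ℝ (Fin d),
      Integrable (fun k : EuclideanSpace ℝ (Fin d) => (⟪k, l⟫ : ℝ) ^ 2) ν := by
    intro l
    refine (hν2.mul_const (‖l‖ ^ 2)).mono' (((hinner_cont l).pow 2).aestronglyMeasurable) ?_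
    refine Filter.Eventually.of_forall fun k => ?_
    rw [Real.norm_eq_abs, abs_of_nonneg (sq_nonneg _)]
    exact hCS k l
  have hint_cos : ∀ l : EuclideanSpace ℝ (Fin d),
      Integrable (fun k : EuclideanSpace ℝ (Fin d) => Real.cos (⟪k, l⟫ : ℝ) - 1) ν := by
    intro l
    refine (hν2.mul_const (‖l‖ ^ 2)).mono'
      ((((Real.continuous_cos).comp (hinner_cont l)).sub continuous_const).aestronglyMeasurable) ?_
    refine Filter.Eventually.of_forall fun k => ?_
    rw [Real.norm_eq_abs, abs_of_nonpos (by nlinarith [Real.cos_le_one (⟪k, l⟫ : ℝ)])]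
    nlinarith [Real.one_sub_sq_div_two_le_cos (x := (⟪k, l⟫ : ℝ)), hCS k l]
  have hint_h : ∀ l : EuclideanSpace ℝ (Fin d),
      Integrable (fun k : EuclideanSpace ℝ (Fin d) =>
        Real.cos (⟪k, l⟫ : ℝ) - 1 + (⟪k, l⟫ : ℝ) ^ 2 / 2) ν :=
    fun l => (hint_cos l).add ((hint_inner_sq l).div_const 2)
  -- the quadratic form
  have hQsum : ∀ l : EuclideanSpace ℝ (Fin d),
      ∑ i, ∑ j, l i * B i j * l j = ∫ k, (⟪k, l⟫ : ℝ) ^ 2 ∂ν := by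
    intro l
    have hint2 : ∀ i j, Integrable
        (fun k : EuclideanSpace ℝ (Fin d) => l i * (k i * k j) * l j) ν :=
      fun i j => ((hint_coord i j).const_mul _).mul_const _
    calc ∑ i, ∑ j, l i * B i j * l j
        = ∑ i, ∑ j, ∫ k, l i * (k i * k j) * l j ∂ν := by
          refine Finset.sum_congr rfl fun i _ => Finset.sum_congr rfl fun j _ => ?_
          rw [hB, ← integral_const_mul, ← integral_mul_const]
      _ = ∑ i, ∫ k, ∑ j, l i * (k i * k j) * l j ∂ν :=
          Finset.sum_congr rfl fun i _ => (integral_finset_sum _ (fun j _ => hint2 i j)).symm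
      _ = ∫ k, ∑ i, ∑ j, l i * (k i * k j) * l j ∂ν :=
          (integral_finset_sum _ (fun i _ => integrable_finset_sum _ (fun j _ => hint2 i j))).symm
      _ = ∫ k, (⟪k, l⟫ : ℝ) ^ 2 ∂ν := by
          congr 1
          funext k
          have h : (⟪k, l⟫ : ℝ) = ∑ i, k i * l i := by
            simp [PiLp.inner_apply, RCLike.inner_apply, mul_comm]
          rw [h, sq, Finset.sum_mul_sum]
          exact Finset.sum_congr rfl fun i _ => Finset.sum_congr rfl fun j _ => by ring
  -- a ν-a.e. statement on a volume-null set forces ν = 0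
  have hnuke : ∀ A : Set (EuclideanSpace ℝ (Fin d)), volume A = 0 →
      (∀ᵐ k ∂ν, k ∈ A) → False := by
    intro A h0 hae
    have h1 : ν A = 0 := hac h0
    have h2 : ν Aᶜ = 0 := by
      rw [ae_iff] at hae
      exact hae
    have h3 : ν Set.univ ≤ ν A + ν Aᶜ := by
      rw [← Set.union_compl_self A]
      exact measure_union_le _ _
    rw [h1, h2, add_zero] at h3
    exact hne (Measure.measure_univ_eq_zero.mp (le_antisymm h3 zero_le))
  -- positivity of the quadratic form
  have hQpos : ∀ l : EuclideanSpace ℝ (Fin d), l ≠ 0 →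
      0 < ∫ k, (⟪k, l⟫ : ℝ) ^ 2 ∂ν := by
    intro l hl
    rcases (integral_nonneg (f := fun k => (⟪k, l⟫ : ℝ) ^ 2) (fun k => sq_nonneg ((⟪k, l⟫ : ℝ)))).lt_or_eq with h | h
    · exact h
    exfalso
    have hae : (fun k : EuclideanSpace ℝ (Fin d) => (⟪k, l⟫ : ℝ) ^ 2) =ᵐ[ν] 0 :=
      (integral_eq_zero_iff_of_nonneg (fun k => sq_nonneg _) (hint_inner_sq l)).mp h.symm
    refine hnuke {k | (⟪k, l⟫ : ℝ) = 0} (aux_null l hl 0) ?_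
    filter_upwards [hae] with k hk
    exact pow_eq_zero_iff (Nat.succ_ne_zero 1) |>.mp hk
  -- negativity of ψ
  have hψneg : ∀ l : EuclideanSpace ℝ (Fin d), l ≠ 0 → ψ l < 0 := by
    intro l hl
    have hle : ψ l ≤ 0 := by
      rw [hψ l]
      refine integral_nonpos fun k => ?_
      show Real.cos (⟪k, l⟫ : ℝ) - 1 ≤ 0
      nlinarith [Real.cos_le_one (⟪k, l⟫ : ℝ)]
    rcases hle.lt_or_eq with h | h
    · exact h
    exfalso
    have heq : ∫ k, (1 - Real.cos (⟪k, l⟫ : ℝ)) ∂ν = 0 := by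
      have hfn : (fun k : EuclideanSpace ℝ (Fin d) => 1 - Real.cos (⟪k, l⟫ : ℝ))
          = fun k => -(Real.cos (⟪k, l⟫ : ℝ) - 1) := by funext k; ring
      rw [hfn, integral_neg, ← hψ l, h, neg_zero]
    have hae : (fun k : EuclideanSpace ℝ (Fin d) => 1 - Real.cos (⟪k, l⟫ : ℝ)) =ᵐ[ν] 0 := by
      refine (integral_eq_zero_iff_of_nonneg (fun k => ?_) ?_).mp heq
      · show (0 : ℝ) ≤ 1 - Real.cos (⟪k, l⟫ : ℝ)
        nlinarith [Real.cos_le_one (⟪k, l⟫ : ℝ)]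
      · have h6 : (fun k : EuclideanSpace ℝ (Fin d) => 1 - Real.cos (⟪k, l⟫ : ℝ))
            = fun k => -(Real.cos (⟪k, l⟫ : ℝ) - 1) := by funext k; ring
        rw [h6]
        exact (hint_cos l).neg
    have hnull2 : volume {k : EuclideanSpace ℝ (Fin d) | Real.cos (⟪k, l⟫ : ℝ) = 1} = 0 := by
      have hsub : {k : EuclideanSpace ℝ (Fin d) | Real.cos (⟪k, l⟫ : ℝ) = 1} ⊆ ⋃ n : ℤ,
          {k : EuclideanSpace ℝ (Fin d) | (⟪k, l⟫ : ℝ) = (n : ℝ) * (2 * Real.pi)} := by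
        intro k hk
        obtain ⟨n, hn⟩ := (Real.cos_eq_one_iff _).mp hk
        exact Set.mem_iUnion.mpr ⟨n, hn.symm⟩
      exact measure_mono_null hsub (measure_iUnion_null fun n => aux_null l hl _)
    refine hnuke _ hnull2 ?_
    filter_upwards [hae] with k hk
    have h5 : (1 : ℝ) - Real.cos (⟪k, l⟫ : ℝ) = 0 := hk
    show Real.cos (⟪k, l⟫ : ℝ) = 1
    linarith
  -- decomposition of ψ
  have hψdecomp : ∀ l : EuclideanSpace ℝ (Fin d),
      ψ l = -(∫ k, (⟪k, l⟫ : ℝ) ^ 2 ∂ν) / 2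
        + ∫ k, (Real.cos (⟪k, l⟫ : ℝ) - 1 + (⟪k, l⟫ : ℝ) ^ 2 / 2) ∂ν := by
    intro l
    rw [hψ l]
    have hfn : (fun k : EuclideanSpace ℝ (Fin d) => Real.cos (⟪k, l⟫ : ℝ) - 1)
        = fun k => (Real.cos (⟪k, l⟫ : ℝ) - 1 + (⟪k, l⟫ : ℝ) ^ 2 / 2)
          - (⟪k, l⟫ : ℝ) ^ 2 / 2 := by funext k; ring
    rw [hfn, integral_sub (hint_h l) ((hint_inner_sq l).div_const 2), integral_div]
    ring
  refine ⟨Matrix.posDef_iff_dotProduct_mulVec.mpr ⟨?_, ?_⟩, hψneg, ?_⟩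
  · -- Hermitian
    ext i j
    rw [Matrix.conjTranspose_apply, star_trivial, hB, hB]
    congr 1
    funext k
    ring
  · -- positive definiteness
    intro x hx
    set l : EuclideanSpace ℝ (Fin d) := (WithLp.equiv 2 _).symm x with hldef
    have hl : l ≠ 0 := by simpa [hldef] using hx
    have h1 : dotProduct (star x) (B.mulVec x) = ∑ i, ∑ j, l i * B i j * l j := by
      simp only [dotProduct, Matrix.mulVec, Pi.star_apply, star_trivial, Finset.mul_sum]
      exact Finset.sum_congr rfl fun i _ => Finset.sum_congr rfl fun j _ => by
        simp [hldef]; ring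
    rw [h1, hQsum l]
    exact hQpos l hl
  · -- quantitative bounds
    intro ε hε
    obtain ⟨hε0, hε1⟩ := hε
    -- minimum of the quadratic form on the unit sphere
    have hGc : Continuous (fun l : EuclideanSpace ℝ (Fin d) =>
        ∑ i, ∑ j, l i * B i j * l j) := by
      refine continuous_finset_sum _ fun i _ => continuous_finset_sum _ fun j _ => ?_
      exact (((EuclideanSpace.proj i).continuous.mul continuous_const).mul
        (EuclideanSpace.proj j).continuous)
    have hcomp : IsCompact (Metric.sphere (0 : EuclideanSpace ℝ (Fin d)) 1) :=
      isCompact_sphere _ _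
    have hsne : (Metric.sphere (0 : EuclideanSpace ℝ (Fin d)) 1).Nonempty := by
      refine ⟨EuclideanSpace.single ⟨0, hd⟩ 1, ?_⟩
      simp [EuclideanSpace.norm_single]
    obtain ⟨l₀, hl₀s, hmin⟩ := hcomp.exists_isMinOn hsne hGc.continuousOn
    have hl₀ : ‖l₀‖ = 1 := by simpa using hl₀s
    set c : ℝ := ∑ i, ∑ j, l₀ i * B i j * l₀ j with hcdef
    have hc0 : 0 < c := by
      rw [hcdef, hQsum l₀]
      exact hQpos l₀ (by intro h; simp [h] at hl₀)
    have hcmin : ∀ l : EuclideanSpace ℝ (Fin d), ‖l‖ = 1 →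
        c ≤ ∑ i, ∑ j, l i * B i j * l j := fun l hl => hmin (by simp [hl])
    clear_value c
    -- lower bound c‖l‖² ≤ Q l
    have hlow : ∀ l : EuclideanSpace ℝ (Fin d),
        c * ‖l‖ ^ 2 ≤ ∫ k, (⟪k, l⟫ : ℝ) ^ 2 ∂ν := by
      intro l
      rcases eq_or_ne l 0 with rfl | hl
      · simp
      · have hln : ‖l‖ ≠ 0 := norm_ne_zero_iff.mpr hl
        set u : EuclideanSpace ℝ (Fin d) := ‖l‖⁻¹ • l with hudef
        have hu : ‖u‖ = 1 := norm_smul_inv_norm hl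
        have hlu : l = ‖l‖ • u := by
          rw [hudef, smul_smul, mul_inv_cancel₀ hln, one_smul]
        have hsc : ∀ k : EuclideanSpace ℝ (Fin d),
            (⟪k, l⟫ : ℝ) ^ 2 = ‖l‖ ^ 2 * (⟪k, u⟫ : ℝ) ^ 2 := by
          intro k
          have hinner : (⟪k, l⟫ : ℝ) = ‖l‖ * (⟪k, u⟫ : ℝ) := by
            conv_lhs => rw [hlu]
            rw [real_inner_smul_right]
          rw [hinner]
          ring
        have h1 : ∫ k, (⟪k, l⟫ : ℝ) ^ 2 ∂ν = ‖l‖ ^ 2 * ∫ k, (⟪k, u⟫ : ℝ) ^ 2 ∂ν := by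
          rw [← integral_const_mul]
          congr 1
          funext k
          exact hsc k
        have h2 : c ≤ ∫ k, (⟪k, u⟫ : ℝ) ^ 2 ∂ν := by
          rw [← hQsum u]
          exact hcmin u hu
        rw [h1]
        nlinarith [sq_nonneg ‖l‖]
    -- dominated convergence to find δ
    have hint_min : ∀ t : ℝ, Integrable (fun k : EuclideanSpace ℝ (Fin d) =>
        ‖k‖ ^ 2 * min 1 (‖k‖ ^ 2 * t ^ 2)) ν := by
      intro t
      refine hν2.mono' (((continuous_norm.pow 2).mul (continuous_const.min
        ((continuous_norm.pow 2).mul continuous_const))).aestronglyMeasurable) ?_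
      refine Filter.Eventually.of_forall fun k => ?_
      have h1 : (0 : ℝ) ≤ min 1 (‖k‖ ^ 2 * t ^ 2) := le_min zero_le_one (by positivity)
      have h2 : min 1 (‖k‖ ^ 2 * t ^ 2) ≤ 1 := min_le_left _ _
      rw [Real.norm_eq_abs, abs_of_nonneg (mul_nonneg (by positivity) h1)]
      nlinarith [sq_nonneg ‖k‖]
    have hF : Filter.Tendsto (fun n : ℕ =>
        ∫ k, ‖k‖ ^ 2 * min 1 (‖k‖ ^ 2 * ((1 : ℝ) / (n + 1)) ^ 2) ∂ν)
        Filter.atTop (nhds 0) := by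
      have h0 : (0 : ℝ) = ∫ _k : EuclideanSpace ℝ (Fin d), (0 : ℝ) ∂ν := by simp
      rw [h0]
      refine tendsto_integral_of_dominated_convergence (fun k => ‖k‖ ^ 2) ?_ hν2 ?_ ?_
      · intro n
        exact ((continuous_norm.pow 2).mul (continuous_const.min
          ((continuous_norm.pow 2).mul continuous_const))).aestronglyMeasurable
      · intro n
        refine Filter.Eventually.of_forall fun k => ?_
        have h1 : (0 : ℝ) ≤ min 1 (‖k‖ ^ 2 * ((1 : ℝ) / (n + 1)) ^ 2) :=
          le_min zero_le_one (by positivity)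
        have h2 : min 1 (‖k‖ ^ 2 * ((1 : ℝ) / (n + 1)) ^ 2) ≤ 1 := min_le_left _ _
        rw [Real.norm_eq_abs, abs_of_nonneg (mul_nonneg (by positivity) h1)]
        nlinarith [sq_nonneg ‖k‖]
      · refine Filter.Eventually.of_forall fun k => ?_
        have h1 : Filter.Tendsto (fun n : ℕ => (1 : ℝ) / (n + 1)) Filter.atTop (nhds 0) :=
          tendsto_one_div_add_atTop_nhds_zero_nat
        have h2 : Filter.Tendsto (fun n : ℕ => ‖k‖ ^ 2 * ((1 : ℝ) / (n + 1)) ^ 2)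
            Filter.atTop (nhds 0) := by
          have := (h1.pow 2).const_mul (‖k‖ ^ 2)
          simpa using this
        have h3 : Filter.Tendsto (fun n : ℕ => min 1 (‖k‖ ^ 2 * ((1 : ℝ) / (n + 1)) ^ 2))
            Filter.atTop (nhds 0) := by
          have := (tendsto_const_nhds (x := (1 : ℝ)) (f := Filter.atTop (α := ℕ))).min h2
          simpa using this
        have := h3.const_mul (‖k‖ ^ 2)
        simpa using this
    obtain ⟨N, hN⟩ := (hF.eventually (gt_mem_nhds (show (0 : ℝ) < ε * c / 2 by have := mul_pos hε0 hc0; linarith))).exists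
    set δ : ℝ := (1 : ℝ) / (N + 1) with hδdef
    have hδ0 : 0 < δ := by rw [hδdef]; positivity
    clear_value δ
    refine ⟨δ, hδ0, fun l hlδ => ?_⟩
    set Q : ℝ := ∫ k, (⟪k, l⟫ : ℝ) ^ 2 ∂ν with hQdef
    set R : ℝ := ∫ k, (Real.cos (⟪k, l⟫ : ℝ) - 1 + (⟪k, l⟫ : ℝ) ^ 2 / 2) ∂ν with hRdef
    clear_value Q R
    have hQ0 : 0 ≤ Q := by
      rw [hQdef]; exact integral_nonneg fun k => sq_nonneg _
    have hR0 : 0 ≤ R := by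
      rw [hRdef]; exact integral_nonneg fun k => aux_cos_lower ((⟪k, l⟫ : ℝ))
    have hl2δ : ‖l‖ ^ 2 ≤ δ ^ 2 := pow_le_pow_left₀ (norm_nonneg l) hlδ 2
    have hRle : R ≤ ‖l‖ ^ 2 * ∫ k, ‖k‖ ^ 2 * min 1 (‖k‖ ^ 2 * δ ^ 2) ∂ν := by
      rw [hRdef, ← integral_const_mul]
      refine integral_mono (hint_h l) ((hint_min δ).const_mul _) fun k => ?_
      have hb := aux_cos_upper ((⟪k, l⟫ : ℝ))
      have hx2 : (⟪k, l⟫ : ℝ) ^ 2 ≤ ‖k‖ ^ 2 * ‖l‖ ^ 2 := hCS k l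
      have hx2' : (⟪k, l⟫ : ℝ) ^ 2 ≤ ‖k‖ ^ 2 * δ ^ 2 :=
        hx2.trans (mul_le_mul_of_nonneg_left hl2δ (sq_nonneg ‖k‖))
      have hmin' : min 1 ((⟪k, l⟫ : ℝ) ^ 2) ≤ min 1 (‖k‖ ^ 2 * δ ^ 2) :=
        min_le_min le_rfl hx2'
      have hminn : (0 : ℝ) ≤ min 1 ((⟪k, l⟫ : ℝ) ^ 2) := le_min zero_le_one (sq_nonneg _)
      calc Real.cos (⟪k, l⟫ : ℝ) - 1 + (⟪k, l⟫ : ℝ) ^ 2 / 2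
          ≤ (⟪k, l⟫ : ℝ) ^ 2 * min 1 ((⟪k, l⟫ : ℝ) ^ 2) := hb
        _ ≤ (‖k‖ ^ 2 * ‖l‖ ^ 2) * min 1 (‖k‖ ^ 2 * δ ^ 2) :=
            mul_le_mul hx2 hmin' hminn (by positivity)
        _ = ‖l‖ ^ 2 * (‖k‖ ^ 2 * min 1 (‖k‖ ^ 2 * δ ^ 2)) := by ring
    have hRQ : R ≤ ε / 2 * Q := by
      have h3 := hlow l
      rw [← hQdef] at h3
      calc R ≤ ‖l‖ ^ 2 * ∫ k, ‖k‖ ^ 2 * min 1 (‖k‖ ^ 2 * δ ^ 2) ∂ν := hRle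
        _ ≤ ‖l‖ ^ 2 * (ε * c / 2) := mul_le_mul_of_nonneg_left hN.le (sq_nonneg ‖l‖)
        _ = ε / 2 * (c * ‖l‖ ^ 2) := by ring
        _ ≤ ε / 2 * Q := mul_le_mul_of_nonneg_left h3 (by linarith)
    have hψl : ψ l = -Q / 2 + R := by
      rw [hQdef, hRdef]; exact hψdecomp l
    rw [hQsum l, ← hQdef]
    have hεQ : 0 ≤ ε * Q := mul_nonneg hε0.le hQ0
    constructor
    · linarith [hR0, hεQ, hψl]
    · linarith [hRQ, hψl]
end
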